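/- Let r ≥ 2, c ≥ 1/(r−1), ε > 1/c, and k ≥ r be fixed. Then for all sufficiently large n there exists an r-uniform hypergraph G on [n] with at least (1/2)·n^{−δ}·C(n,r) edges (for any fixed δ with 1/c < δ < ε) such that every subset of at most k vertices spans at most c times as many edges as vertices; consequently the number of r-uniform hypergraphs on [n] in which every induced subhypergraph on at most k vertices H satisfies e(H) ≤ c·v(H) is at least 2^{n^{r−ε}}. -/

import Mathlib

open Filter Finset

section
variable {α : Type*} [DecidableEq α]

lemma sum_pow_powerset (T : Finset α) (p q : ℝ) :
    ∑ E ∈ T.powerset, p ^ E.card * q ^ (T.card - E.card) = (p + q) ^ T.card := by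
  conv_rhs => rw [← Finset.prod_const, Finset.prod_add]
  refine Finset.sum_congr rfl fun t ht => ?_
  rw [Finset.prod_const, Finset.prod_const, Finset.card_sdiff_of_subset (Finset.mem_powerset.1 ht)]

lemma sum_w_superset (K F : Finset α) (hFK : F ⊆ K) (p q : ℝ) :
    ∑ E ∈ K.powerset.filter (fun E => F ⊆ E), p ^ E.card * q ^ (K.card - E.card)
      = p ^ F.card * (p + q) ^ (K.card - F.card) := by
  rw [show K.card - F.card = (K \ F).card from (Finset.card_sdiff_of_subset hFK).symm,
    ← sum_pow_powerset (K \ F) p q, Finset.mul_sum]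
  refine Finset.sum_bij' (fun E _ => E \ F) (fun E' _ => F ∪ E') ?_ ?_ ?_ ?_ ?_
  · intro E hE
    simp only [Finset.mem_filter, Finset.mem_powerset] at hE
    exact Finset.mem_powerset.2 (Finset.sdiff_subset_sdiff hE.1 le_rfl)
  · intro E' hE'
    simp only [Finset.mem_powerset] at hE'
    refine Finset.mem_filter.2 ⟨Finset.mem_powerset.2 (Finset.union_subset hFK
      (hE'.trans Finset.sdiff_subset)), Finset.subset_union_left⟩
  · intro E hE
    simp only [Finset.mem_filter, Finset.mem_powerset] at hE
    exact Finset.union_sdiff_of_subset hE.2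
  · intro E' hE'
    simp only [Finset.mem_powerset] at hE'
    exact Finset.union_sdiff_cancel_left (Finset.disjoint_right.2
      fun a ha => (Finset.mem_sdiff.1 (hE' ha)).2)
  · intro E hE
    simp only [Finset.mem_filter, Finset.mem_powerset] at hE
    have h1 : F.card ≤ E.card := Finset.card_le_card hE.2
    have h2 : E.card ≤ K.card := Finset.card_le_card hE.1
    rw [Finset.card_sdiff_of_subset hE.2, Finset.card_sdiff_of_subset hFK, ← mul_assoc, ← pow_add]
    congr 2 <;> omega
end

lemma core (n r k : ℕ) (c δ : ℝ) (hc : 0 < c) (hδ : 0 < δ) (hrk : r ≤ k)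
    (h2 : 2 ≤ n) (hkn : k ≤ n)
    (hB : ∑ s ∈ Finset.range (k+1),
        ((n:ℝ) ^ (s:ℕ) * ((k.choose r : ℝ) * (n:ℝ) ^ (-δ)) ^ (⌊c * s⌋₊ + 1))
      ≤ 1/2 * (n:ℝ) ^ (-δ) * (n.choose r : ℝ)) :
    ∃ E : Finset (Finset (Fin n)), (∀ f ∈ E, f.card = r) ∧
      (1/2) * (n:ℝ) ^ (-δ) * (n.choose r : ℝ) ≤ (E.card : ℝ) ∧
      ∀ S : Finset (Fin n), S.card ≤ k → ((E.filter (· ⊆ S)).card : ℝ) ≤ c * S.card := by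
  classical
  have hn0 : (0:ℝ) < n := by positivity
  have hn1 : (1:ℝ) < n := by exact_mod_cast (by omega : 1 < n)
  set p : ℝ := (n:ℝ) ^ (-δ) with hp
  have hp0 : 0 < p := Real.rpow_pos_of_pos hn0 _
  have hp1 : p < 1 := Real.rpow_lt_one_of_one_lt_of_neg hn1 (by linarith)
  set q : ℝ := 1 - p with hq
  have hq0 : 0 < q := by simp [hq]; linarith
  set K : Finset (Finset (Fin n)) := Finset.powersetCard r Finset.univ with hKdef
  have hKmem : ∀ f ∈ K, f.card = r := fun f hf => (Finset.mem_powersetCard.1 hf).2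
  have hKcard : K.card = n.choose r := by
    rw [hKdef, Finset.card_powersetCard, Finset.card_univ, Fintype.card_fin]
  set m : ℕ → ℕ := fun s => ⌊c * s⌋₊ + 1 with hm
  set B : ℕ → Finset (Finset (Finset (Fin n))) := fun s =>
    (Finset.powersetCard (m s) K).filter (fun F => (F.biUnion id).card ≤ s) with hBdef
  set w : Finset (Finset (Fin n)) → ℝ := fun E => p ^ E.card * q ^ (K.card - E.card) with hw
  have hw0 : ∀ E, 0 < w E := fun E => by positivity
  have hsumw : ∑ E ∈ K.powerset, w E = 1 := by
    rw [hw, sum_pow_powerset]; simp [hq]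
  have hWF : ∀ F : Finset (Finset (Fin n)), F ⊆ K →
      ∑ E ∈ K.powerset.filter (fun E => F ⊆ E), w E = p ^ F.card := by
    intro F hF
    rw [hw, sum_w_superset K F hF p q]
    simp [hq]
  -- B card bound
  have hBcard : ∀ s ∈ Finset.range (k+1),
      ((B s).card : ℝ) ≤ (n:ℝ) ^ (s:ℕ) * (k.choose r : ℝ) ^ (m s) := by
    intro s hs
    rw [Finset.mem_range] at hs
    have hsub : B s ⊆ (Finset.powersetCard s (Finset.univ : Finset (Fin n))).biUnion
        (fun S => Finset.powersetCard (m s) (Finset.powersetCard r S)) := by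
      intro F hF
      simp only [hBdef, Finset.mem_filter, Finset.mem_powersetCard] at hF
      obtain ⟨⟨hFK, hFc⟩, hFu⟩ := hF
      obtain ⟨S, hS1, hS2, hS3⟩ := Finset.exists_subsuperset_card_eq
        (Finset.subset_univ (F.biUnion id)) hFu
        (by rw [Finset.card_univ, Fintype.card_fin]; omega)
      refine Finset.mem_biUnion.2 ⟨S, Finset.mem_powersetCard.2 ⟨hS2, hS3⟩,
        Finset.mem_powersetCard.2 ⟨?_, hFc⟩⟩
      intro f hf
      refine Finset.mem_powersetCard.2 ⟨?_, hKmem f (hFK hf)⟩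
      exact (Finset.subset_biUnion_of_mem id hf).trans hS1
    have hnat : (B s).card ≤ n.choose s * (k.choose r) ^ (m s) := by
      calc (B s).card ≤ _ := Finset.card_le_card hsub
        _ ≤ ∑ S ∈ Finset.powersetCard s (Finset.univ : Finset (Fin n)),
            (Finset.powersetCard (m s) (Finset.powersetCard r S)).card :=
          Finset.card_biUnion_le
        _ ≤ ∑ S ∈ Finset.powersetCard s (Finset.univ : Finset (Fin n)),
            (k.choose r) ^ (m s) := by
          refine Finset.sum_le_sum fun S hS => ?_
          rw [Finset.card_powersetCard, Finset.card_powersetCard,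
            (Finset.mem_powersetCard.1 hS).2]
          calc (s.choose r).choose (m s) ≤ (s.choose r) ^ (m s) := Nat.choose_le_pow _ _
            _ ≤ (k.choose r) ^ (m s) :=
              Nat.pow_le_pow_left (Nat.choose_le_choose r (by omega)) _
        _ = n.choose s * (k.choose r) ^ (m s) := by
          rw [Finset.sum_const, Finset.card_powersetCard, Finset.card_univ,
            Fintype.card_fin, smul_eq_mul]
    calc ((B s).card : ℝ) ≤ (n.choose s : ℝ) * (k.choose r : ℝ) ^ (m s) := by
          exact_mod_cast hnat
      _ ≤ (n:ℝ) ^ (s:ℕ) * (k.choose r : ℝ) ^ (m s) := by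
        have := Nat.choose_le_pow n s
        gcongr
        exact_mod_cast this
  -- badness count
  set badc : Finset (Finset (Fin n)) → ℕ := fun E =>
    ∑ s ∈ Finset.range (k+1), ((B s).filter (· ⊆ E)).card with hbadc
  -- weighted sum of badness
  have hkey : ∑ E ∈ K.powerset, w E * (badc E : ℝ)
      = ∑ s ∈ Finset.range (k+1), ((B s).card : ℝ) * p ^ (m s) := by
    have step1 : ∀ E, w E * (badc E : ℝ)
        = ∑ s ∈ Finset.range (k+1), w E * (((B s).filter (· ⊆ E)).card : ℝ) := by
      intro E
      rw [hbadc]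
      push_cast
      rw [Finset.mul_sum]
    rw [Finset.sum_congr rfl fun E _ => step1 E, Finset.sum_comm]
    refine Finset.sum_congr rfl fun s hs => ?_
    have hBs : ∀ F ∈ B s, F ⊆ K ∧ F.card = m s := by
      intro F hF
      simp only [hBdef, Finset.mem_filter, Finset.mem_powersetCard] at hF
      exact ⟨hF.1.1, hF.1.2⟩
    calc ∑ E ∈ K.powerset, w E * (((B s).filter (· ⊆ E)).card : ℝ)
        = ∑ E ∈ K.powerset, ∑ F ∈ B s, (if F ⊆ E then w E else 0) := by
          refine Finset.sum_congr rfl fun E _ => ?_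
          rw [Finset.card_filter]
          push_cast
          rw [Finset.mul_sum]
          refine Finset.sum_congr rfl fun F _ => ?_
          split <;> simp
      _ = ∑ F ∈ B s, ∑ E ∈ K.powerset, (if F ⊆ E then w E else 0) := Finset.sum_comm
      _ = ∑ F ∈ B s, p ^ (m s) := by
          refine Finset.sum_congr rfl fun F hF => ?_
          rw [← Finset.sum_filter, hWF F (hBs F hF).1, (hBs F hF).2]
      _ = ((B s).card : ℝ) * p ^ (m s) := by rw [Finset.sum_const, nsmul_eq_mul]
  -- weighted sum of size
  have hsize : ∑ E ∈ K.powerset, w E * (E.card : ℝ) = p * K.card := by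
    have step1 : ∀ E ∈ K.powerset, w E * (E.card : ℝ)
        = ∑ f ∈ K, (if ({f} : Finset (Finset (Fin n))) ⊆ E then w E else 0) := by
      intro E hE
      have hEK : E ⊆ K := Finset.mem_powerset.1 hE
      have : (E.card : ℝ) = ∑ f ∈ K, (if ({f} : Finset (Finset (Fin n))) ⊆ E then 1 else 0) := by
        simp only [Finset.singleton_subset_iff]
        rw [Finset.sum_ite_mem]
        simp [Finset.inter_eq_right.2 hEK]
      rw [this, Finset.mul_sum]
      refine Finset.sum_congr rfl fun F _ => ?_
      split <;> simp
    rw [Finset.sum_congr rfl step1, Finset.sum_comm]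
    have : ∀ f ∈ K, ∑ E ∈ K.powerset, (if ({f} : Finset (Finset (Fin n))) ⊆ E then w E else 0)
        = p := by
      intro f hf
      rw [← Finset.sum_filter, hWF {f} (Finset.singleton_subset_iff.2 hf),
        Finset.card_singleton, pow_one]
    rw [Finset.sum_congr rfl this, Finset.sum_const, nsmul_eq_mul, mul_comm]
  -- total bad weight is small
  have hbadsmall : ∑ s ∈ Finset.range (k+1), ((B s).card : ℝ) * p ^ (m s)
      ≤ 1/2 * p * K.card := by
    rw [hKcard]
    calc ∑ s ∈ Finset.range (k+1), ((B s).card : ℝ) * p ^ (m s)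
        ≤ ∑ s ∈ Finset.range (k+1),
            (n:ℝ) ^ (s:ℕ) * ((k.choose r : ℝ) * p) ^ (m s) := by
          refine Finset.sum_le_sum fun s hs => ?_
          rw [mul_pow, ← mul_assoc]
          have h1 := hBcard s hs
          have h2 : (0:ℝ) ≤ p ^ (m s) := by positivity
          nlinarith [h1, h2]
      _ ≤ 1/2 * p * (n.choose r : ℝ) := hB
  -- find a good E
  have havg : 1/2 * p * K.card ≤ ∑ E ∈ K.powerset, w E * ((E.card : ℝ) - badc E) := by
    have : ∑ E ∈ K.powerset, w E * ((E.card : ℝ) - badc E)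
        = p * K.card - ∑ s ∈ Finset.range (k+1), ((B s).card : ℝ) * p ^ (m s) := by
      rw [← hsize, ← hkey, ← Finset.sum_sub_distrib]
      refine Finset.sum_congr rfl fun E _ => by ring
    rw [this]
    linarith
  have hex : ∃ E ∈ K.powerset, 1/2 * p * K.card ≤ (E.card : ℝ) - badc E := by
    by_contra hcon
    push_neg at hcon
    have hlt : ∑ E ∈ K.powerset, w E * ((E.card : ℝ) - badc E)
        < ∑ E ∈ K.powerset, w E * (1/2 * p * K.card) := by
      refine Finset.sum_lt_sum_of_nonempty ⟨∅, Finset.empty_mem_powerset K⟩ fun E hE => ?_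
      exact mul_lt_mul_of_pos_left (hcon E hE) (hw0 E)
    rw [← Finset.sum_mul, hsumw, one_mul] at hlt
    linarith
  obtain ⟨E, hEP, hEgood⟩ := hex
  have hEK : E ⊆ K := Finset.mem_powerset.1 hEP
  -- deletion
  set pick : Finset (Finset (Fin n)) → Finset (Fin n) := fun F =>
    if h : F.Nonempty then h.choose else ∅ with hpick
  set D : Finset (Finset (Fin n)) := (Finset.range (k+1)).biUnion
    (fun s => ((B s).filter (· ⊆ E)).image pick) with hD
  have hpickmem : ∀ F : Finset (Finset (Fin n)), F.Nonempty → pick F ∈ F := by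
    intro F hF
    rw [hpick]
    simp only [dif_pos hF]
    exact hF.choose_spec
  have hDcard : D.card ≤ badc E := by
    rw [hbadc]
    calc D.card ≤ ∑ s ∈ Finset.range (k+1), (((B s).filter (· ⊆ E)).image pick).card :=
      Finset.card_biUnion_le
      _ ≤ ∑ s ∈ Finset.range (k+1), ((B s).filter (· ⊆ E)).card :=
        Finset.sum_le_sum fun s _ => Finset.card_image_le
  have hDE : D ⊆ E := by
    intro f hf
    rw [hD] at hf
    obtain ⟨s, hs, hf2⟩ := Finset.mem_biUnion.1 hf
    obtain ⟨F, hF, rfl⟩ := Finset.mem_image.1 hf2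
    obtain ⟨hFB, hFE⟩ := Finset.mem_filter.1 hF
    have hFne : F.Nonempty := by
      rw [← Finset.card_pos, ((by
        simp only [hBdef, Finset.mem_filter, Finset.mem_powersetCard] at hFB
        exact hFB.1.2) : F.card = m s)]
      simp only [hm]
      omega
    exact hFE (hpickmem F hFne)
  refine ⟨E \ D, ?_, ?_, ?_⟩
  · intro f hf
    exact hKmem f (hEK (Finset.mem_sdiff.1 hf).1)
  · rw [Finset.card_sdiff_of_subset hDE, hKcard] at *
    have h1 : (badc E : ℝ) ≥ D.card := by exact_mod_cast hDcard
    have h2 : ((E.card - D.card : ℕ) : ℝ) = (E.card : ℝ) - D.card := by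
      have := Finset.card_le_card hDE
      push_cast [Nat.cast_sub this]
      ring
    rw [h2]
    linarith
  · intro S hS
    by_contra hcon
    push_neg at hcon
    set s := S.card with hsdef
    have hms : m s ≤ ((E \ D).filter (· ⊆ S)).card := by
      have h1 : (⌊c * s⌋₊ : ℝ) ≤ c * s := Nat.floor_le (by positivity)
      have h2 : (⌊c * s⌋₊ : ℝ) < (((E \ D).filter (· ⊆ S)).card : ℝ) := lt_of_le_of_lt h1 hcon
      have h3 : ⌊c * s⌋₊ < ((E \ D).filter (· ⊆ S)).card := by exact_mod_cast h2
      simp only [hm]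
      omega
    obtain ⟨F, hFsub, hFcard⟩ := Finset.exists_subset_card_eq hms
    have hFE' : F ⊆ E \ D := hFsub.trans (Finset.filter_subset _ _)
    have hFE : F ⊆ E := hFE'.trans Finset.sdiff_subset
    have hFne : F.Nonempty := by
      rw [← Finset.card_pos, hFcard]
      simp only [hm]
      omega
    have hFB : F ∈ B s := by
      simp only [hBdef, Finset.mem_filter, Finset.mem_powersetCard]
      refine ⟨⟨hFE.trans hEK, hFcard⟩, ?_⟩
      refine Finset.card_le_card ?_ |>.trans_eq hsdef.symm
      refine Finset.biUnion_subset.2 fun f hf => ?_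
      exact (Finset.mem_filter.1 (hFsub hf)).2
    have hpD : pick F ∈ D := by
      rw [hD]
      refine Finset.mem_biUnion.2 ⟨s, Finset.mem_range.2 (by omega), ?_⟩
      exact Finset.mem_image_of_mem _ (Finset.mem_filter.2 ⟨hFB, hFE⟩)
    have hpF : pick F ∈ E \ D := hFE' (hpickmem F hFne)
    exact (Finset.mem_sdiff.1 hpF).2 hpD

set_option maxHeartbeats 2000000 in
theorem stmt7 (r k : ℕ) (hr : 2 ≤ r) (hk : r ≤ k) (c ε δ : ℝ)
    (hc : 1 / ((r : ℝ) - 1) ≤ c) (hε : 1 / c < ε) (hδ1 : 1 / c < δ) (hδ2 : δ < ε) :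
    ∀ᶠ n : ℕ in atTop,
      (∃ E : Finset (Finset (Fin n)), (∀ f ∈ E, f.card = r) ∧
        (1 / 2) * (n : ℝ) ^ (-δ) * (n.choose r : ℝ) ≤ (E.card : ℝ) ∧
        ∀ S : Finset (Fin n), S.card ≤ k →
          ((E.filter (· ⊆ S)).card : ℝ) ≤ c * S.card) ∧
      (2 : ℝ) ^ ((n : ℝ) ^ ((r : ℝ) - ε)) ≤
        (({E : Finset (Finset (Fin n)) | (∀ f ∈ E, f.card = r) ∧
          ∀ S : Finset (Fin n), S.card ≤ k →
            ((E.filter (· ⊆ S)).card : ℝ) ≤ c * S.card}.ncard : ℝ)) := by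
  classical
  have hr2 : (2:ℝ) ≤ (r:ℝ) := by exact_mod_cast hr
  have hc0 : 0 < c := lt_of_lt_of_le (one_div_pos.2 (by linarith)) hc
  have hδ0 : 0 < δ := lt_trans (one_div_pos.2 hc0) hδ1
  have hδc : 1 < δ * c := by rwa [div_lt_iff₀ hc0] at hδ1
  have hrc : 1 < (r:ℝ) * c := by
    have h1 : (0:ℝ) < (r:ℝ) - 1 := by linarith
    have h2 : (1/((r:ℝ)-1)) * ((r:ℝ)-1) = 1 := by field_simp
    nlinarith [mul_le_mul_of_nonneg_left hc (show (0:ℝ) ≤ (r:ℝ) by linarith)]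
  set m : ℕ → ℕ := fun s => ⌊c * s⌋₊ + 1 with hm
  set A : ℝ := (k.choose r : ℝ) with hA
  have hA1 : 1 ≤ A := by
    rw [hA]
    exact_mod_cast Nat.choose_pos hk
  set CC : ℝ := A ^ (m k) with hCC
  have hCC1 : 1 ≤ CC := one_le_pow₀ hA1
  set Rc : ℝ := ((2*r : ℕ) : ℝ) ^ r with hRc
  have hRc1 : 1 ≤ Rc := by
    rw [hRc]
    refine one_le_pow₀ ?_
    exact_mod_cast (by omega : 1 ≤ 2*r)
  set Cbig : ℝ := (k+1) * CC * (2*Rc) with hCbig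
  set ee : ℕ → ℝ := fun s => (s:ℝ) - δ * (m s) with hee
  set γ : ℕ → ℝ := fun s => (r:ℝ) - δ - ee s with hγ
  have hγpos : ∀ s ∈ Finset.range (k+1), 0 < γ s := by
    intro s hs
    have hm1 : (1:ℝ) ≤ (m s : ℝ) := by
      simp only [hm]; push_cast; linarith [Nat.cast_nonneg (α := ℝ) ⌊c * s⌋₊]
    have hmgt : c * s < (m s : ℝ) := by
      simp only [hm]; push_cast; exact Nat.lt_floor_add_one (c * s)
    simp only [hγ, hee]
    by_cases hsr : s < r
    · have hsr' : (s:ℝ) + 1 ≤ r := by exact_mod_cast hsr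
      nlinarith
    · push_neg at hsr
      have hsr' : (r:ℝ) ≤ (s:ℝ) := by exact_mod_cast hsr
      have h1 : δ * (c*s) < δ * m s := by nlinarith
      have h2 : (r:ℝ)*(δ*c-1) ≤ (s:ℝ)*(δ*c-1) :=
        mul_le_mul_of_nonneg_right hsr' (by linarith)
      nlinarith
  have F2 : ∀ᶠ n : ℕ in atTop, ∀ s ∈ Finset.range (k+1), Cbig ≤ (n:ℝ) ^ (γ s) := by
    rw [Filter.eventually_all_finset]
    intro s hs
    have := (tendsto_rpow_atTop (hγpos s hs)).comp
      (tendsto_natCast_atTop_atTop (R := ℝ))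
    exact this.eventually_ge_atTop Cbig
  have F3 : ∀ᶠ n : ℕ in atTop, 2*Rc ≤ (n:ℝ) ^ (ε-δ) := by
    have := (tendsto_rpow_atTop (by linarith : (0:ℝ) < ε - δ)).comp
      (tendsto_natCast_atTop_atTop (R := ℝ))
    exact this.eventually_ge_atTop _
  filter_upwards [eventually_ge_atTop (max 2 (max k (2*r))), F2, F3] with n hn hn2 hn3
  have h2n : 2 ≤ n := le_trans (le_max_left _ _) hn
  have hkn : k ≤ n := le_trans ((le_max_left _ _).trans (le_max_right _ _)) hn
  have h2rn : 2*r ≤ n := le_trans ((le_max_right _ _).trans (le_max_right _ _)) hn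
  have hn0R : (0:ℝ) < n := by positivity
  set p : ℝ := (n:ℝ) ^ (-δ) with hp
  have hp0 : 0 < p := Real.rpow_pos_of_pos hn0R _
  have hchoose : ((n:ℝ)) ^ (r:ℕ) ≤ Rc * (n.choose r : ℝ) := by
    have hnat : n ^ r ≤ (2*r)^r * n.choose r := by
      calc n ^ r ≤ (2*(n+1-r))^r := Nat.pow_le_pow_left (by omega) r
        _ = 2^r * (n+1-r)^r := Nat.mul_pow 2 _ r
        _ ≤ 2^r * (r.factorial * n.choose r) := by
            have h := Nat.pow_sub_le_descFactorial n r
            rw [Nat.descFactorial_eq_factorial_mul_choose] at h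
            exact Nat.mul_le_mul_left _ h
        _ ≤ 2^r * (r^r * n.choose r) :=
            Nat.mul_le_mul_left _ (Nat.mul_le_mul_right _ (Nat.factorial_le_pow r))
        _ = (2*r)^r * n.choose r := by rw [Nat.mul_pow]; ring
    calc ((n:ℝ))^(r:ℕ) ≤ (((2*r)^r * n.choose r : ℕ) : ℝ) := by exact_mod_cast hnat
      _ = Rc * (n.choose r : ℝ) := by rw [hRc]; push_cast; ring
  have hrpowmul : ∀ s t : ℕ, (n:ℝ)^(s:ℕ) * p^t = (n:ℝ)^((s:ℝ) - δ*t) := by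
    intro s t
    rw [hp, ← Real.rpow_natCast (n:ℝ) s, ← Real.rpow_natCast ((n:ℝ)^(-δ)) t,
      ← Real.rpow_mul hn0R.le, ← Real.rpow_add hn0R]
    ring_nf
  have hrd : (n:ℝ)^((r:ℝ)-δ) = p * (n:ℝ)^(r:ℕ) := by
    rw [hp, ← Real.rpow_natCast (n:ℝ) r, ← Real.rpow_add hn0R]
    ring_nf
  have hB : ∑ s ∈ Finset.range (k+1),
      ((n:ℝ) ^ (s:ℕ) * ((k.choose r : ℝ) * (n:ℝ) ^ (-δ)) ^ (⌊c * s⌋₊ + 1))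
      ≤ 1/2 * (n:ℝ) ^ (-δ) * (n.choose r : ℝ) := by
    have hper : ∀ s ∈ Finset.range (k+1),
        (n:ℝ) ^ (s:ℕ) * (A * p) ^ (m s) ≤ (1/2 * p * (n.choose r : ℝ)) / (k+1) := by
      intro s hs
      have hms : m s ≤ m k := by
        simp only [hm]
        have : c * s ≤ c * k := by
          have : (s:ℝ) ≤ k := by exact_mod_cast Nat.lt_succ_iff.1 (Finset.mem_range.1 hs)
          nlinarith
        exact Nat.add_le_add_right (Nat.floor_le_floor this) 1
      have h2 : A ^ (m s) ≤ CC := by rw [hCC]; exact pow_le_pow_right₀ hA1 hms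
      have h3 : (n:ℝ)^(s:ℕ) * p^(m s) = (n:ℝ)^(ee s) := hrpowmul s (m s)
      have hne : (0:ℝ) < (n:ℝ)^(ee s) := Real.rpow_pos_of_pos hn0R _
      have h4 : Cbig * (n:ℝ)^(ee s) ≤ (n:ℝ)^(γ s) * (n:ℝ)^(ee s) := by
        nlinarith [hn2 s hs, hne]
      have h5 : (n:ℝ)^(γ s) * (n:ℝ)^(ee s) = (n:ℝ)^((r:ℝ)-δ) := by
        rw [← Real.rpow_add hn0R]
        congr 1
        simp only [hγ]
        ring
      have h7 : p * (n:ℝ)^(r:ℕ) ≤ p * (Rc * (n.choose r : ℝ)) := by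
        nlinarith [hchoose, hp0]
      have hterm : (n:ℝ)^(s:ℕ) * (A*p)^(m s) ≤ CC * (n:ℝ)^(ee s) := by
        rw [mul_pow, show (n:ℝ)^(s:ℕ) * (A^(m s) * p^(m s))
            = A^(m s) * ((n:ℝ)^(s:ℕ) * p^(m s)) by ring, h3]
        nlinarith [h2, hne]
      rw [le_div_iff₀ (by positivity : (0:ℝ) < (k:ℝ)+1)]
      rw [← mul_le_mul_iff_of_pos_right (show (0:ℝ) < 2*Rc by positivity)]
      calc (n:ℝ)^(s:ℕ) * (A*p)^(m s) * ((k:ℝ)+1) * (2*Rc)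
          ≤ CC * (n:ℝ)^(ee s) * ((k:ℝ)+1) * (2*Rc) := by
            have hpos : (0:ℝ) ≤ ((k:ℝ)+1) * (2*Rc) := by positivity
            nlinarith [hterm]
        _ = Cbig * (n:ℝ)^(ee s) := by rw [hCbig]; push_cast; ring
        _ ≤ (n:ℝ)^((r:ℝ)-δ) := by rw [← h5]; exact h4
        _ = p * (n:ℝ)^(r:ℕ) := hrd
        _ ≤ p * (Rc * (n.choose r : ℝ)) := h7
        _ = 1/2 * p * (n.choose r : ℝ) * (2*Rc) := by ring
    calc ∑ s ∈ Finset.range (k+1),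
        ((n:ℝ) ^ (s:ℕ) * ((k.choose r : ℝ) * (n:ℝ) ^ (-δ)) ^ (⌊c * s⌋₊ + 1))
        ≤ ∑ s ∈ Finset.range (k+1), (1/2 * p * (n.choose r : ℝ)) / (k+1) := by
          refine Finset.sum_le_sum fun s hs => ?_
          have := hper s hs
          simpa [hA, hp, hm] using this
      _ = 1/2 * (n:ℝ) ^ (-δ) * (n.choose r : ℝ) := by
          rw [Finset.sum_const, Finset.card_range, nsmul_eq_mul, hp]
          push_cast
          field_simp
  obtain ⟨E, hE1, hE2, hE3⟩ := core n r k c δ hc0 hδ0 hk h2n hkn hB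
  refine ⟨⟨E, hE1, hE2, hE3⟩, ?_⟩
  have hEc : (n:ℝ)^((r:ℝ)-ε) ≤ (E.card : ℝ) := by
    rw [← mul_le_mul_iff_of_pos_right (show (0:ℝ) < 2*Rc by positivity)]
    calc (n:ℝ)^((r:ℝ)-ε) * (2*Rc) ≤ (n:ℝ)^((r:ℝ)-ε) * (n:ℝ)^(ε-δ) := by
          nlinarith [hn3, Real.rpow_pos_of_pos hn0R ((r:ℝ)-ε)]
      _ = (n:ℝ)^((r:ℝ)-δ) := by rw [← Real.rpow_add hn0R]; ring_nf
      _ = p * (n:ℝ)^(r:ℕ) := hrd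
      _ ≤ p * (Rc * (n.choose r : ℝ)) := by nlinarith [hchoose, hp0]
      _ = (1/2 * p * (n.choose r : ℝ)) * (2*Rc) := by ring
      _ ≤ (E.card : ℝ) * (2*Rc) := by
          have h := hE2
          rw [← hp] at h
          nlinarith [h, hRc1]
  have hsub : ↑E.powerset ⊆ {E' : Finset (Finset (Fin n)) | (∀ f ∈ E', f.card = r) ∧
      ∀ S : Finset (Fin n), S.card ≤ k →
        ((E'.filter (· ⊆ S)).card : ℝ) ≤ c * S.card} := by
    intro E'' hE''
    rw [Finset.mem_coe, Finset.mem_powerset] at hE''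
    refine ⟨fun f hf => hE1 f (hE'' hf), fun S hS => ?_⟩
    refine le_trans ?_ (hE3 S hS)
    exact_mod_cast Nat.cast_le.2 (Finset.card_le_card
      (Finset.filter_subset_filter _ hE''))
  have hcard : ((E.powerset.card : ℕ) : ℝ) ≤
      (({E' : Finset (Finset (Fin n)) | (∀ f ∈ E', f.card = r) ∧
        ∀ S : Finset (Fin n), S.card ≤ k →
          ((E'.filter (· ⊆ S)).card : ℝ) ≤ c * S.card}.ncard : ℝ)) := by
    have := Set.ncard_le_ncard hsub (Set.toFinite _)
    rw [Set.ncard_coe_finset] at this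
    exact_mod_cast this
  calc (2:ℝ)^((n:ℝ)^((r:ℝ)-ε)) ≤ (2:ℝ)^((E.card:ℝ)) :=
      Real.rpow_le_rpow_of_exponent_le one_le_two hEc
    _ = ((2^E.card : ℕ) : ℝ) := by rw [Real.rpow_natCast]; push_cast; ring
    _ = ((E.powerset.card : ℕ) : ℝ) := by rw [Finset.card_powerset]
    _ ≤ _ := hcard
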